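/- Let B be a finite type of cardinality n and A : Finset B → Finset B → ℝ satisfy semi-detailed balance, Σ_{s ∈ Finset B} A(s,s') = 1 for every s', and particle conservation, A(s,s') = 0 whenever |s| ≠ |s'|. Then for every f ∈ ℝ the Bernoulli product distribution P(s) = f^(|s|) · (1−f)^(n−|s|) is stationary under the collision: Σ_{s ∈ Finset B} A(s,s') · P(s) = P(s') for every s' ∈ Finset B. -/
import Mathlib

/-- A lattice gas collision rule satisfying semi-detailed balance
(`Σ_s A(s,s') = 1` for every `s'`) and particle conservation admits the
Bernoulli product (factorized Fermi-Dirac) distribution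
`P(s) = f^|s| (1−f)^(n−|s|)` as a stationary single-site distribution. -/
theorem semi_detailed_balance_factorized_equilibrium
    (B : Type*) [Fintype B] [DecidableEq B]
    (A : Finset B → Finset B → ℝ)
    (hSDB : ∀ s' : Finset B, ∑ s : Finset B, A s s' = 1)
    (hCons : ∀ s s' : Finset B, s.card ≠ s'.card → A s s' = 0)
    (f : ℝ) (P : Finset B → ℝ)
    (hP : ∀ s : Finset B, P s = f ^ s.card * (1 - f) ^ (Fintype.card B - s.card)) :
    ∀ s' : Finset B, ∑ s : Finset B, A s s' * P s = P s' := by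
  intro s'
  have h : ∀ s : Finset B, A s s' * P s = A s s' * P s' := by
    intro s
    by_cases hc : s.card = s'.card
    · rw [hP, hP, hc]
    · rw [hCons s s' hc]; ring
  calc ∑ s : Finset B, A s s' * P s = ∑ s : Finset B, A s s' * P s' := by
        exact Finset.sum_congr rfl (fun s _ => h s)
    _ = (∑ s : Finset B, A s s') * P s' := by rw [Finset.sum_mul]
    _ = P s' := by rw [hSDB]; ring
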